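/- arXiv:2506.00190 — 4 statements merged into one kernel-verified Lean document; each statement's English description precedes it below -/
import Mathlib

section
/- Generalized Singular Value Decomposition (GSVD): Let A ∈ ℝ^{m×n} and L ∈ ℝ^{p×n} with m ≥ n ≥ p, rank(L) = p, and ker(A) ∩ ker(L) = {0}. Then there exist a matrix U ∈ ℝ^{m×n} with orthonormal columns, a matrix V ∈ ℝ^{p×p} with orthonormal columns, a nonsingular matrix X ∈ ℝ^{n×n}, and diagonal matrices Σ = diag(σ₁,…,σ_p) ∈ ℝ^{p×p} and M = diag(μ₁,…,μ_p) ∈ ℝ^{p×p} such that A = U · [[Σ, 0],[0, I_{n−p}]] · X⁻¹ and L = V · [M, 0] · X⁻¹, where 0 ≤ σ₁ ≤ … ≤ σ_p ≤ 1, 1 ≥ μ₁ ≥ … ≥ μ_p > 0, and σᵢ² + μᵢ² = 1 for i = 1,…,p. -/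
open Matrix


private lemma dot_self_nonneg' {a : ℕ} (v : Fin a → ℝ) : 0 ≤ v ⬝ᵥ v :=
  Finset.sum_nonneg fun i _ => mul_self_nonneg _

private lemma dot_tmul {a b : ℕ} (A : Matrix (Fin a) (Fin b) ℝ) (x y : Fin b → ℝ) :
    x ⬝ᵥ ((Aᵀ * A) *ᵥ y) = (A *ᵥ x) ⬝ᵥ (A *ᵥ y) := by
  rw [← mulVec_mulVec, dotProduct_mulVec, vecMul_transpose]

private lemma symm_dot {n : ℕ} {T : Matrix (Fin n) (Fin n) ℝ} (hT : Tᵀ = T) (u v : Fin n → ℝ) :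
    (T *ᵥ u) ⬝ᵥ v = u ⬝ᵥ (T *ᵥ v) := by
  rw [← vecMul_transpose, hT, ← dotProduct_mulVec]

private lemma mul_col {a b c : ℕ} (P : Matrix (Fin a) (Fin b) ℝ) (Q : Matrix (Fin b) (Fin c) ℝ)
    (i : Fin a) (j : Fin c) : (P * Q) i j = (P *ᵥ fun l => Q l j) i := rfl

private lemma euclid_inner {m : ℕ} (x y : EuclideanSpace ℝ (Fin m)) :
    (inner ℝ x y : ℝ) = (fun i => x i) ⬝ᵥ (fun i => y i) := by
  rw [EuclideanSpace.inner_eq_star_dotProduct, dotProduct_comm]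
  rfl

open scoped MatrixOrder in
private lemma exists_herm_sqrt {n : ℕ} (S : Matrix (Fin n) (Fin n) ℝ) (h : S.PosSemidef) :
    ∃ R : Matrix (Fin n) (Fin n) ℝ, R.IsHermitian ∧ R * R = S :=
  ⟨CFC.sqrt S, (CFC.sqrt_nonneg S).posSemidef.1, CFC.sqrt_mul_sqrt_self S h.nonneg⟩

private lemma antitone_pos_prefix {p k : ℕ} (d : Fin (p + k) → ℝ) (hmono : Antitone d)
    (hnn : ∀ j, 0 ≤ d j)
    (hcard : (Finset.univ.filter (fun j => d j ≠ 0)).card = p) :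
    ∀ j : Fin (p + k), d j ≠ 0 ↔ (j : ℕ) < p := by
  intro j
  constructor
  · intro hne
    by_contra hge
    push_neg at hge
    have hpos : 0 < d j := lt_of_le_of_ne (hnn j) (Ne.symm hne)
    have hsub : Finset.Iic j ⊆ Finset.univ.filter (fun i => d i ≠ 0) := by
      intro i hi
      simp only [Finset.mem_Iic] at hi
      simp only [Finset.mem_filter, Finset.mem_univ, true_and]
      exact ne_of_gt (lt_of_lt_of_le hpos (hmono hi))
    have := Finset.card_le_card hsub
    rw [Fin.card_Iic, hcard] at this
    omega
  · intro hlt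
    by_contra h0
    have hsub : Finset.univ.filter (fun i => d i ≠ 0) ⊆ Finset.Iio j := by
      intro i hi
      simp only [Finset.mem_filter, Finset.mem_univ, true_and] at hi
      simp only [Finset.mem_Iio]
      by_contra hij
      push_neg at hij
      exact hi (le_antisymm (h0 ▸ hmono hij) (hnn i))
    have := Finset.card_le_card hsub
    rw [Fin.card_Iio, hcard] at this
    omega

private lemma exists_orthonormal_factor {m n : ℕ} (h : n ≤ m) (B : Matrix (Fin m) (Fin n) ℝ)
    (dv : Fin n → ℝ)
    (hd : ∀ i j, (fun l => B l i) ⬝ᵥ (fun l => B l j) = if i = j then dv j ^ 2 else 0) :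
    ∃ U : Matrix (Fin m) (Fin n) ℝ, Uᵀ * U = 1 ∧ U * Matrix.diagonal dv = B := by
  classical
  have hBzero : ∀ j, dv j = 0 → ∀ l, B l j = 0 := by
    intro j hj l
    have h0 : (fun l => B l j) ⬝ᵥ (fun l => B l j) = 0 := by
      rw [hd j j]; simp [hj]
    have := dotProduct_self_eq_zero.mp h0
    exact congrFun this l
  set v : Fin n → EuclideanSpace ℝ (Fin m) := fun j => WithLp.toLp 2 ((dv j)⁻¹ • (fun l => B l j)) with hv
  set s : Set (Fin n) := {j | dv j ≠ 0} with hs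
  have f_inj : Function.Injective (Fin.castLE h) := Fin.castLE_injective h
  set s' : Set (Fin m) := (Fin.castLE h) '' s with hs'
  -- inner products of v
  have hvinner : ∀ i j, (inner ℝ (v i) (v j) : ℝ) =
      (dv i)⁻¹ * ((dv j)⁻¹ * if i = j then dv j ^ 2 else 0) := by
    intro i j
    rw [euclid_inner (v i) (v j)]
    have hvv : (fun l => v i l) ⬝ᵥ (fun l => v j l)
        = ((dv i)⁻¹ • fun l => B l i) ⬝ᵥ ((dv j)⁻¹ • fun l => B l j) := rfl
    rw [hvv, smul_dotProduct, dotProduct_smul, smul_eq_mul, smul_eq_mul, hd]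
  have hon : Orthonormal ℝ (s.restrict v) := by
    rw [orthonormal_iff_ite]
    rintro ⟨i, hi⟩ ⟨j, hj⟩
    show inner ℝ (v i) (v j) = _
    rw [hvinner]
    by_cases hij : i = j
    · subst hij
      simp only [if_pos rfl, Subtype.mk.injEq, if_pos rfl]
      have : dv i ≠ 0 := hi
      field_simp
      simp
    · simp [hij, Subtype.mk.injEq]
  -- transfer to s'
  have hon' : Orthonormal ℝ (s'.restrict (fun i : Fin m =>
      if hi : (i : ℕ) < n then v ⟨i, hi⟩ else 0)) := by
    set v' : Fin m → EuclideanSpace ℝ (Fin m) :=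
      fun i => if hi : (i : ℕ) < n then v ⟨i, hi⟩ else 0 with hv'
    let e : s ≃ s' := Equiv.Set.image _ s f_inj
    have hcomp : s'.restrict v' = (s.restrict v) ∘ e.symm := by
      funext x
      obtain ⟨⟨j, hj⟩, hx⟩ : ∃ y : s, e y = x := ⟨e.symm x, e.apply_symm_apply x⟩
      subst hx
      simp only [Function.comp_apply, Equiv.symm_apply_apply, Set.restrict_apply]
      have : (e ⟨j, hj⟩ : Fin m) = Fin.castLE h j := rfl
      show v' (e ⟨j, hj⟩ : Fin m) = v j
      rw [this]
      simp only [hv']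
      have hjn : ((Fin.castLE h j : Fin m) : ℕ) < n := j.isLt
      rw [dif_pos hjn]
      rfl
    rw [hcomp]
    exact hon.comp _ e.symm.injective
  obtain ⟨b, hb⟩ := hon'.exists_orthonormalBasis_extension_of_card_eq
    (by simp) 
  refine ⟨Matrix.of fun l j => b (Fin.castLE h j) l, ?_, ?_⟩
  · ext i j
    have horth := orthonormal_iff_ite.mp b.orthonormal (Fin.castLE h i) (Fin.castLE h j)
    rw [euclid_inner] at horth
    rw [mul_apply, one_apply]
    have : ∑ l, (Matrix.of fun l j => b (Fin.castLE h j) l)ᵀ i l *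
        (Matrix.of fun l j => b (Fin.castLE h j) l) l j
        = (fun l => b (Fin.castLE h i) l) ⬝ᵥ (fun l => b (Fin.castLE h j) l) := rfl
    rw [this, horth]
    simp [f_inj.eq_iff]
  · ext l j
    rw [mul_diagonal, of_apply]
    by_cases hj : dv j = 0
    · rw [hj, mul_zero, hBzero j hj l]
    · have hmem : Fin.castLE h j ∈ s' := ⟨j, hj, rfl⟩
      rw [hb _ hmem]
      have hjn : ((Fin.castLE h j : Fin m) : ℕ) < n := j.isLt
      rw [dif_pos hjn]
      have hcast : (⟨((Fin.castLE h j : Fin m) : ℕ), hjn⟩ : Fin n) = j := by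
        ext; simp
      rw [hcast]
      show ((dv j)⁻¹ • fun l => B l j) l * dv j = B l j
      simp only [Pi.smul_apply, smul_eq_mul]
      field_simp

/-- Generalized Singular Value Decomposition (GSVD) for a pair `(A, L)` with
`A ∈ ℝ^{m×n}`, `L ∈ ℝ^{p×n}`, `m ≥ n ≥ p` (here `n = p + k`), `rank L = p`
and `ker A ∩ ker L = {0}`. -/
theorem gsvd (m p k : ℕ) (hm : p + k ≤ m)
    (A : Matrix (Fin m) (Fin (p + k)) ℝ) (L : Matrix (Fin p) (Fin (p + k)) ℝ)
    (hrank : L.rank = p)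
    (hker : ∀ v : Fin (p + k) → ℝ, A.mulVec v = 0 → L.mulVec v = 0 → v = 0) :
    ∃ (U : Matrix (Fin m) (Fin (p + k)) ℝ) (V : Matrix (Fin p) (Fin p) ℝ)
      (X : Matrix (Fin (p + k)) (Fin (p + k)) ℝ) (σ μ : Fin p → ℝ),
      Uᵀ * U = 1 ∧ Vᵀ * V = 1 ∧ IsUnit X.det ∧
      A = U * (Matrix.fromBlocks (Matrix.diagonal σ) 0 0
              (1 : Matrix (Fin k) (Fin k) ℝ)).submatrix
            finSumFinEquiv.symm finSumFinEquiv.symm * X⁻¹ ∧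
      L = V * (Matrix.fromCols (Matrix.diagonal μ)
              (0 : Matrix (Fin p) (Fin k) ℝ)).submatrix id finSumFinEquiv.symm * X⁻¹ ∧
      Monotone σ ∧ Antitone μ ∧
      (∀ i, 0 ≤ σ i) ∧ (∀ i, σ i ≤ 1) ∧ (∀ i, 0 < μ i) ∧ (∀ i, μ i ≤ 1) ∧
      (∀ i, σ i ^ 2 + μ i ^ 2 = 1) := by
  classical
  have hconj : ∀ {a b : ℕ} (P : Matrix (Fin a) (Fin b) ℝ), Pᴴ = Pᵀ := fun P =>
    conjTranspose_eq_transpose_of_trivial P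
  have hApsd : (Aᵀ * A).PosSemidef := by
    have := posSemidef_conjTranspose_mul_self A; rwa [hconj] at this
  have hLpsd : (Lᵀ * L).PosSemidef := by
    have := posSemidef_conjTranspose_mul_self L; rwa [hconj] at this
  have hSpsd : (Aᵀ * A + Lᵀ * L).PosSemidef := hApsd.add hLpsd
  have hstar : ∀ x : Fin (p + k) → ℝ, star x = x := fun x => funext fun _ => rfl
  have hSpd : (Aᵀ * A + Lᵀ * L).PosDef := by
    refine Matrix.PosDef.of_dotProduct_mulVec_pos hSpsd.1 fun x hx => ?_
    rw [hstar, add_mulVec, dotProduct_add, dot_tmul A, dot_tmul L]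
    by_contra hng
    push_neg at hng
    have h1 := dot_self_nonneg' (A *ᵥ x)
    have h2 := dot_self_nonneg' (L *ᵥ x)
    have hA0 : (A *ᵥ x) ⬝ᵥ (A *ᵥ x) = 0 := le_antisymm (by linarith) h1
    have hL0 : (L *ᵥ x) ⬝ᵥ (L *ᵥ x) = 0 := le_antisymm (by linarith) h2
    exact hx (hker x (dotProduct_self_eq_zero.mp hA0) (dotProduct_self_eq_zero.mp hL0))
  obtain ⟨R, hRH, hRmul⟩ := exists_herm_sqrt (Aᵀ * A + Lᵀ * L) hSpsd
  have hRdet : IsUnit R.det := by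
    have hdet : R.det * R.det = (Aᵀ * A + Lᵀ * L).det := by rw [← det_mul, hRmul]
    have hpos := hSpd.det_pos
    refine isUnit_iff_ne_zero.mpr fun h0 => ?_
    rw [h0, mul_zero] at hdet
    rw [← hdet] at hpos
    exact lt_irrefl _ hpos
  set T := R⁻¹ with hTdef
  have hTt : Tᵀ = T := by
    rw [← hconj]
    exact hRH.inv
  have hTR : T * R = 1 := nonsing_inv_mul R hRdet
  have hRT : R * T = 1 := mul_nonsing_inv R hRdet
  have hTdet : IsUnit T.det := IsUnit.of_mul_eq_one _ (by rw [← det_mul, hTR, det_one])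
  set M := T * (Lᵀ * L) * T with hMdef
  set Ma := T * (Aᵀ * A) * T with hMadef
  have hMpsd : M.PosSemidef := by
    have h := posSemidef_conjTranspose_mul_self (L * T)
    rw [hconj, transpose_mul, hTt] at h
    simpa [hMdef, Matrix.mul_assoc] using h
  have hMapsd : Ma.PosSemidef := by
    have h := posSemidef_conjTranspose_mul_self (A * T)
    rw [hconj, transpose_mul, hTt] at h
    simpa [hMadef, Matrix.mul_assoc] using h
  have hsum : Ma + M = 1 := by
    have hstep : Ma + M = T * (R * R) * T := by
      rw [hRmul, hMadef, hMdef, Matrix.mul_add, Matrix.add_mul]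
    rw [hstep, Matrix.mul_assoc T (R * R) T, Matrix.mul_assoc R R T, hRT, Matrix.mul_one, hTR]
  have hMH : M.IsHermitian := hMpsd.1
  set e : Fin (p + k) → ℝ := hMH.eigenvalues with hedef
  set π : Equiv.Perm (Fin (p + k)) := Tuple.sort (fun i => -(e i)) with hπdef
  set d : Fin (p + k) → ℝ := fun j => e (π j) with hddef
  have hd_anti : Antitone d := by
    intro i j hij
    have h := Tuple.monotone_sort (fun i => -(e i)) hij
    simp only [Function.comp_apply] at h
    exact neg_le_neg_iff.mp h
  have hd0 : ∀ j, 0 ≤ d j := fun j => hMpsd.eigenvalues_nonneg (π j)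
  set w : Fin (p + k) → (Fin (p + k) → ℝ) :=
    fun j => (hMH.eigenvectorBasis (π j) : EuclideanSpace ℝ (Fin (p + k))) with hwdef
  have hMw : ∀ j, M *ᵥ (w j) = d j • (w j) := fun j => hMH.mulVec_eigenvectorBasis (π j)
  have hwdot : ∀ i j, (w i) ⬝ᵥ (w j) = if i = j then 1 else 0 := by
    intro i j
    have horth := orthonormal_iff_ite.mp hMH.eigenvectorBasis.orthonormal (π i) (π j)
    rw [euclid_inner] at horth
    rw [show ((w i) ⬝ᵥ (w j)) = ((fun l => hMH.eigenvectorBasis (π i) l) ⬝ᵥ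
      (fun l => hMH.eigenvectorBasis (π j) l)) from rfl, horth]
    simp
  have hMa_eq : Ma = 1 - M := eq_sub_of_add_eq hsum
  have hd1 : ∀ j, d j ≤ 1 := by
    intro j
    have h := hMapsd.dotProduct_mulVec_nonneg (w j)
    rw [hstar, hMa_eq, sub_mulVec, one_mulVec, hMw, dotProduct_sub, dotProduct_smul,
      smul_eq_mul, hwdot] at h
    simp at h
    linarith
  have hrankM : M.rank = p := by
    rw [hMdef, rank_mul_eq_left_of_isUnit_det T (T * (Lᵀ * L)) hTdet,
      rank_mul_eq_right_of_isUnit_det T (Lᵀ * L) hTdet, rank_transpose_mul_self, hrank]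
  have hcount : (Finset.univ.filter (fun j => d j ≠ 0)).card = p := by
    have h1 : M.rank = Fintype.card {i // e i ≠ 0} := hMH.rank_eq_card_non_zero_eigs
    have h2 : Fintype.card {j // d j ≠ 0} = Fintype.card {i // e i ≠ 0} :=
      Fintype.card_congr (π.subtypeEquiv fun a => Iff.rfl)
    rw [Fintype.card_subtype] at h2
    rw [h2, ← h1, hrankM]
  have hpos := antitone_pos_prefix d hd_anti hd0 hcount
  have hdl : ∀ i : Fin p, 0 < d (Fin.castAdd k i) := fun i =>
    lt_of_le_of_ne (hd0 (Fin.castAdd k i))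
      (Ne.symm ((hpos (Fin.castAdd k i)).mpr (by simpa using i.isLt)))
  have hdr : ∀ j : Fin k, d (Fin.natAdd p j) = 0 := by
    intro j
    by_contra h0
    have h := (hpos _).mp h0
    simp [Fin.coe_natAdd] at h
  set σ : Fin p → ℝ := fun i => Real.sqrt (1 - d (Fin.castAdd k i)) with hσdef
  set μ : Fin p → ℝ := fun i => Real.sqrt (d (Fin.castAdd k i)) with hμdef
  set δv : Fin (p + k) → ℝ := Sum.elim σ (1 : Fin k → ℝ) ∘ finSumFinEquiv.symm with hδdef
  have hδsq : ∀ j, δv j ^ 2 = 1 - d j := by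
    intro j
    obtain ⟨c, rfl⟩ := finSumFinEquiv.surjective j
    cases c with
    | inl i =>
      have h1 : δv (finSumFinEquiv (Sum.inl i)) = σ i := by
        rw [hδdef]; simp
      rw [h1, finSumFinEquiv_apply_left, hσdef]
      exact Real.sq_sqrt (by linarith [hd1 (Fin.castAdd k i)])
    | inr j' =>
      have h1 : δv (finSumFinEquiv (Sum.inr j')) = 1 := by
        rw [hδdef]; simp
      rw [h1, finSumFinEquiv_apply_right, hdr j']
      norm_num
  set W : Matrix (Fin (p + k)) (Fin (p + k)) ℝ := Matrix.of (fun i j => w j i) with hWdef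
  set X : Matrix (Fin (p + k)) (Fin (p + k)) ℝ := T * W with hXdef
  have hXcol : ∀ j, (fun i => X i j) = T *ᵥ w j := by
    intro j; funext i; rw [hXdef, mul_col]; rfl
  have hWo : Wᵀ * W = 1 := by
    ext i j
    have h : (Wᵀ * W) i j = (w i) ⬝ᵥ (w j) := rfl
    rw [h, hwdot, one_apply]
  have hWdet : IsUnit W.det := by
    have h := congrArg det hWo
    rw [det_mul, det_transpose, det_one] at h
    exact IsUnit.of_mul_eq_one _ h
  have hXdet : IsUnit X.det := by rw [hXdef, det_mul]; exact hTdet.mul hWdet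
  have hkey : ∀ {q : ℕ} (P : Matrix (Fin q) (Fin (p + k)) ℝ) (i j : Fin (p + k)),
      (P *ᵥ (T *ᵥ w i)) ⬝ᵥ (P *ᵥ (T *ᵥ w j)) = (w i) ⬝ᵥ ((T * (Pᵀ * P) * T) *ᵥ w j) := by
    intro q P i j
    rw [← dot_tmul P, symm_dot hTt, mulVec_mulVec, mulVec_mulVec]
  have hLX : ∀ i j, (L *ᵥ (T *ᵥ w i)) ⬝ᵥ (L *ᵥ (T *ᵥ w j)) = if i = j then d j else 0 := by
    intro i j
    rw [hkey L i j, ← hMdef, hMw, dotProduct_smul, smul_eq_mul, hwdot]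
    by_cases hij : i = j <;> simp [hij]
  have hAX : ∀ i j, (A *ᵥ (T *ᵥ w i)) ⬝ᵥ (A *ᵥ (T *ᵥ w j)) = if i = j then 1 - d j else 0 := by
    intro i j
    rw [hkey A i j, ← hMadef, hMa_eq, sub_mulVec, one_mulVec, hMw, dotProduct_sub,
      dotProduct_smul, smul_eq_mul, hwdot]
    by_cases hij : i = j <;> simp [hij]
  have hLX0 : ∀ j : Fin k, L *ᵥ (T *ᵥ w (Fin.natAdd p j)) = 0 := by
    intro j
    apply dotProduct_self_eq_zero.mp
    rw [hLX]
    simp [hdr j]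
  set V : Matrix (Fin p) (Fin p) ℝ :=
    Matrix.of (fun i j => (μ j)⁻¹ * (L *ᵥ (T *ᵥ w (Fin.castAdd k j))) i) with hVdef
  have hμpos : ∀ i, 0 < μ i := fun i => Real.sqrt_pos.mpr (hdl i)
  have hμsq : ∀ i, μ i ^ 2 = d (Fin.castAdd k i) := fun i => Real.sq_sqrt (hd0 _)
  have hVcol : ∀ j, (fun i => V i j) = (μ j)⁻¹ • (L *ᵥ (T *ᵥ w (Fin.castAdd k j))) :=
    fun j => rfl
  have hcastinj : Function.Injective (Fin.castAdd (n := p) k) := fun a b hab => by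
    apply Fin.ext
    simpa using congrArg Fin.val hab
  have hV : Vᵀ * V = 1 := by
    ext i j
    have h : (Vᵀ * V) i j = (fun l => V l i) ⬝ᵥ (fun l => V l j) := rfl
    rw [h, hVcol i, hVcol j, smul_dotProduct, dotProduct_smul, smul_eq_mul, smul_eq_mul, hLX,
      one_apply]
    by_cases hij : i = j
    · subst hij
      rw [if_pos rfl, if_pos rfl, ← hμsq i, pow_two]
      have hne := (hμpos i).ne'
      field_simp
    · rw [if_neg (fun hc => hij (hcastinj hc)), if_neg hij]
      ring
  set Mf := (Matrix.fromCols (Matrix.diagonal μ)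
      (0 : Matrix (Fin p) (Fin k) ℝ)).submatrix id finSumFinEquiv.symm with hMfdef
  have hLXmat : L * X = V * Mf := by
    ext i j
    obtain ⟨c, rfl⟩ := finSumFinEquiv.surjective j
    rw [mul_col L X]
    have hXc : (fun l => X l (finSumFinEquiv c)) = T *ᵥ w (finSumFinEquiv c) := hXcol _
    rw [hXc]
    cases c with
    | inl i' =>
      rw [finSumFinEquiv_apply_left]
      have hR : (V * Mf) i (Fin.castAdd k i') = (V * Matrix.diagonal μ) i i' := by
        rw [mul_apply, mul_apply]
        refine Finset.sum_congr rfl fun l _ => ?_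
        rw [hMfdef]
        simp [Matrix.submatrix_apply, finSumFinEquiv_symm_apply_castAdd]
      rw [hR, mul_diagonal, hVdef]
      have hne := (hμpos i').ne'
      show (L *ᵥ (T *ᵥ w (Fin.castAdd k i'))) i
        = (μ i')⁻¹ * (L *ᵥ (T *ᵥ w (Fin.castAdd k i'))) i * μ i'
      field_simp
    | inr j' =>
      rw [finSumFinEquiv_apply_right]
      have hz : (V * Mf) i (Fin.natAdd p j') = 0 := by
        rw [mul_apply]
        refine Finset.sum_eq_zero fun l _ => ?_
        rw [hMfdef]
        simp [Matrix.submatrix_apply, finSumFinEquiv_symm_apply_natAdd]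
      rw [hz, hLX0 j']
      rfl
  have hLfinal : L = V * Mf * X⁻¹ := by
    rw [← hLXmat, mul_nonsing_inv_cancel_right _ _ hXdet]
  have hBdot : ∀ i j, (fun l => (A * X) l i) ⬝ᵥ (fun l => (A * X) l j)
      = if i = j then δv j ^ 2 else 0 := by
    intro i j
    have hcol : ∀ r, (fun l => (A * X) l r) = A *ᵥ (T *ᵥ w r) := by
      intro r; funext l; rw [mul_col, hXcol r]
    rw [hcol i, hcol j, hAX, ← hδsq j]
  obtain ⟨U, hU1, hU2⟩ := exists_orthonormal_factor hm (A * X) δv hBdot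
  have hSig : (Matrix.fromBlocks (Matrix.diagonal σ) 0 0
      (1 : Matrix (Fin k) (Fin k) ℝ)).submatrix finSumFinEquiv.symm finSumFinEquiv.symm
      = Matrix.diagonal δv := by
    rw [← Matrix.diagonal_one, Matrix.fromBlocks_diagonal, Matrix.submatrix_diagonal_equiv]
    rfl
  have hAfinal : A = U * Matrix.diagonal δv * X⁻¹ := by
    rw [hU2, mul_nonsing_inv_cancel_right _ _ hXdet]
  have hcastle : ∀ {a b : Fin p}, a ≤ b → Fin.castAdd k a ≤ Fin.castAdd k b := by
    intro a b hab
    rw [Fin.le_def, Fin.coe_castAdd, Fin.coe_castAdd]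
    exact hab
  refine ⟨U, V, X, σ, μ, hU1, hV, hXdet, ?_, ?_, ?_, ?_, ?_, ?_, ?_, ?_, ?_⟩
  · rw [hSig]; exact hAfinal
  · rw [← hMfdef]; exact hLfinal
  · intro a b hab
    rw [hσdef]
    exact Real.sqrt_le_sqrt (by linarith [hd_anti (hcastle hab)])
  · intro a b hab
    rw [hμdef]
    exact Real.sqrt_le_sqrt (hd_anti (hcastle hab))
  · intro i; rw [hσdef]; exact Real.sqrt_nonneg _
  · intro i; rw [hσdef]
    exact Real.sqrt_le_one.mpr (by linarith [hd0 (Fin.castAdd k i)])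
  · exact hμpos
  · intro i; rw [hμdef]
    exact Real.sqrt_le_one.mpr (hd1 _)
  · intro i
    rw [hσdef, hμdef, Real.sq_sqrt (by linarith [hd1 (Fin.castAdd k i)] : (0:ℝ) ≤ 1 - d (Fin.castAdd k i)),
      Real.sq_sqrt (hd0 _)]
    ring
end

section
/- Let J ∈ ℝ^{m×n} and L ∈ ℝ^{p×n} with ker(J) ∩ ker(L) = {0} admit the GSVD J = U·[[Σ,0],[0,I_{n−p}]]·X⁻¹, L = V·[M,0]·X⁻¹ with generalized singular pairs (σᵢ, μᵢ), i = 1,…,p. Fix F ∈ ℝ^m and q ∈ (0,1), and for λ > 0 and y ∈ ℝ^m define d(λ, y) := −(JᵀJ + λ LᵀL)⁻¹ Jᵀ(F − y) and ω(λ, y) := ‖F − y + J d(λ, y)‖² − q²‖F − y‖². Suppose (λ₀, y₀) with λ₀ > 0 satisfies ω(λ₀, y₀) = 0, and suppose there exists an index i ∈ {1,…,p} with σᵢ > 0 and (Uᵀ(F − y₀))ᵢ ≠ 0. Then ω is continuously differentiable in a neighborhood of (λ₀, y₀) with ∂ω/∂λ(λ₀, y₀) > 0, and there exist open neighborhoods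 of y₀ and λ₀ and a unique continuous function y ↦ λ^q(y) with λ^q(y₀) = λ₀ and ω(λ^q(y), y) = 0 for all y in the neighborhood; in particular, the regularization parameter λ^q depends continuously on the data y. -/
open Matrix

/-- Euclidean norm of a vector in `ℝ^k`. -/
noncomputable def euclNorm {k : ℕ} (v : Fin k → ℝ) : ℝ :=
  ‖(EuclideanSpace.equiv (Fin k) ℝ).symm v‖


lemma euclNorm_sq {k : ℕ} (v : Fin k → ℝ) : euclNorm v ^ 2 = v ⬝ᵥ v := by
  unfold euclNorm
  rw [EuclideanSpace.norm_eq, Real.sq_sqrt (by positivity)]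
  simp [dotProduct, sq]

/-- the scalar filter factor function -/
noncomputable def hhA (s u lam : ℝ) : ℝ :=
  2 * (s ^ 2 / (s ^ 2 + lam * u ^ 2)) - (s ^ 2 / (s ^ 2 + lam * u ^ 2)) ^ 2

lemma eA_pos {s u a : ℝ} (hu : 0 < u) (ha : 0 < a) : 0 < s ^ 2 + a * u ^ 2 := by
  nlinarith [sq_nonneg s, mul_pos ha (pow_pos hu 2)]

lemma hhA_le {s u a b : ℝ} (hs : 0 ≤ s) (hu : 0 < u) (ha : 0 < a) (hab : a ≤ b) :
    hhA s u b ≤ hhA s u a := by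
  have hea : 0 < s ^ 2 + a * u ^ 2 := eA_pos hu ha
  have heb : 0 < s ^ 2 + b * u ^ 2 := eA_pos hu (lt_of_lt_of_le ha hab)
  have h1 : s ^ 2 / (s ^ 2 + b * u ^ 2) ≤ s ^ 2 / (s ^ 2 + a * u ^ 2) := by
    rw [div_le_div_iff₀ heb hea]
    nlinarith [mul_nonneg (mul_nonneg (sq_nonneg s) (sub_nonneg.2 hab)) (sq_nonneg u)]
  have h2 : s ^ 2 / (s ^ 2 + a * u ^ 2) ≤ 1 := by
    rw [div_le_one hea]; nlinarith [mul_pos ha (pow_pos hu 2)]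
  have h0 : 0 ≤ s ^ 2 / (s ^ 2 + b * u ^ 2) := by positivity
  have key : 0 ≤ (s ^ 2 / (s ^ 2 + a * u ^ 2) - s ^ 2 / (s ^ 2 + b * u ^ 2)) *
      (2 - s ^ 2 / (s ^ 2 + a * u ^ 2) - s ^ 2 / (s ^ 2 + b * u ^ 2)) := by
    apply mul_nonneg (by linarith) (by linarith)
  unfold hhA; nlinarith [key]

lemma hhA_lt {s u a b : ℝ} (hs : 0 < s) (hu : 0 < u) (ha : 0 < a) (hab : a < b) :
    hhA s u b < hhA s u a := by
  have hea : 0 < s ^ 2 + a * u ^ 2 := eA_pos hu ha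
  have heb : 0 < s ^ 2 + b * u ^ 2 := eA_pos hu (ha.trans hab)
  have h1 : s ^ 2 / (s ^ 2 + b * u ^ 2) < s ^ 2 / (s ^ 2 + a * u ^ 2) := by
    rw [div_lt_div_iff₀ heb hea]
    nlinarith [mul_pos (mul_pos (pow_pos hs 2) (sub_pos.2 hab)) (pow_pos hu 2)]
  have h2 : s ^ 2 / (s ^ 2 + a * u ^ 2) ≤ 1 := by
    rw [div_le_one hea]; nlinarith [mul_pos ha (pow_pos hu 2)]
  have h0 : 0 ≤ s ^ 2 / (s ^ 2 + b * u ^ 2) := by positivity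
  have key : 0 < (s ^ 2 / (s ^ 2 + a * u ^ 2) - s ^ 2 / (s ^ 2 + b * u ^ 2)) *
      (2 - s ^ 2 / (s ^ 2 + a * u ^ 2) - s ^ 2 / (s ^ 2 + b * u ^ 2)) := by
    apply mul_pos (by linarith) (by linarith)
  unfold hhA; nlinarith [key]

lemma hhA_hasDerivAt (s u a : ℝ) (h : s ^ 2 + a * u ^ 2 ≠ 0) :
    HasDerivAt (fun lam => hhA s u lam)
      ((2 - 2 * (s ^ 2 / (s ^ 2 + a * u ^ 2))) *
        ((0 * (s ^ 2 + a * u ^ 2) - s ^ 2 * u ^ 2) / (s ^ 2 + a * u ^ 2) ^ 2)) a := by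
  have he : HasDerivAt (fun lam : ℝ => s ^ 2 + lam * u ^ 2) (u ^ 2) a := by
    simpa using ((hasDerivAt_id a).mul_const (u ^ 2)).const_add (s ^ 2)
  have hg : HasDerivAt (fun lam : ℝ => s ^ 2 / (s ^ 2 + lam * u ^ 2))
      ((0 * (s ^ 2 + a * u ^ 2) - s ^ 2 * u ^ 2) / (s ^ 2 + a * u ^ 2) ^ 2) a :=
    (hasDerivAt_const a (s ^ 2)).div he h
  have := (hg.const_mul 2).fun_sub (hg.fun_pow 2)
  exact this.congr_deriv (by ring)

lemma hhA_contDiffOn (s u : ℝ) (hu : 0 < u) : ContDiffOn ℝ 1 (hhA s u) (Set.Ioi 0) := by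
  have hden : ContDiffOn ℝ 1 (fun lam : ℝ => s ^ 2 + lam * u ^ 2) (Set.Ioi 0) :=
    (contDiff_const.add (contDiff_id.mul contDiff_const)).contDiffOn
  have hg : ContDiffOn ℝ 1 (fun lam : ℝ => s ^ 2 / (s ^ 2 + lam * u ^ 2)) (Set.Ioi 0) :=
    contDiffOn_const.div hden (fun x hx => (eA_pos hu hx).ne')
  exact (contDiffOn_const.mul hg).sub (hg.pow 2)

noncomputable def phiF {m pp kk : ℕ} (q : ℝ) (Fv : Fin m → ℝ) (σ μ : Fin pp → ℝ)
    (U : Matrix (Fin m) (Fin (pp + kk)) ℝ) (lam : ℝ) (y : Fin m → ℝ) : ℝ :=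
  (1 - q ^ 2) * ((Fv - y) ⬝ᵥ (Fv - y))
    - (∑ i : Fin pp, hhA (σ i) (μ i) lam *
        ((Uᵀ *ᵥ (Fv - y)) (finSumFinEquiv (Sum.inl i))) ^ 2)
    - ∑ j : Fin kk, ((Uᵀ *ᵥ (Fv - y)) (finSumFinEquiv (Sum.inr j))) ^ 2

section phiF
variable {m pp kk : ℕ} (q : ℝ) (Fv : Fin m → ℝ) (σ μ : Fin pp → ℝ)
    (U : Matrix (Fin m) (Fin (pp + kk)) ℝ)

lemma phiF_mono (hσ0 : ∀ i, 0 ≤ σ i) (hμ0 : ∀ i, 0 < μ i) {a b : ℝ}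
    (ha : 0 < a) (hab : a ≤ b) (y : Fin m → ℝ) :
    phiF q Fv σ μ U a y ≤ phiF q Fv σ μ U b y := by
  unfold phiF
  have : ∑ i : Fin pp, hhA (σ i) (μ i) b * ((Uᵀ *ᵥ (Fv - y)) (finSumFinEquiv (Sum.inl i))) ^ 2
      ≤ ∑ i : Fin pp, hhA (σ i) (μ i) a * ((Uᵀ *ᵥ (Fv - y)) (finSumFinEquiv (Sum.inl i))) ^ 2 :=
    Finset.sum_le_sum fun i _ =>
      mul_le_mul_of_nonneg_right (hhA_le (hσ0 i) (hμ0 i) ha hab) (sq_nonneg _)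
  linarith

lemma phiF_strict (hσ0 : ∀ i, 0 ≤ σ i) (hμ0 : ∀ i, 0 < μ i) (i₀ : Fin pp) (hσ : 0 < σ i₀)
    (y : Fin m → ℝ) (hc : (Uᵀ *ᵥ (Fv - y)) (finSumFinEquiv (Sum.inl i₀)) ≠ 0)
    {a b : ℝ} (ha : 0 < a) (hab : a < b) :
    phiF q Fv σ μ U a y < phiF q Fv σ μ U b y := by
  unfold phiF
  have hcpos : 0 < ((Uᵀ *ᵥ (Fv - y)) (finSumFinEquiv (Sum.inl i₀))) ^ 2 :=
    lt_of_le_of_ne (sq_nonneg _) (Ne.symm (pow_ne_zero 2 hc))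
  have : ∑ i : Fin pp, hhA (σ i) (μ i) b * ((Uᵀ *ᵥ (Fv - y)) (finSumFinEquiv (Sum.inl i))) ^ 2
      < ∑ i : Fin pp, hhA (σ i) (μ i) a * ((Uᵀ *ᵥ (Fv - y)) (finSumFinEquiv (Sum.inl i))) ^ 2 := by
    apply Finset.sum_lt_sum
    · exact fun i _ => mul_le_mul_of_nonneg_right (hhA_le (hσ0 i) (hμ0 i) ha hab.le) (sq_nonneg _)
    · exact ⟨i₀, Finset.mem_univ _,
        mul_lt_mul_of_pos_right (hhA_lt hσ (hμ0 i₀) ha hab) hcpos⟩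
  linarith

lemma mulVec_cont (z : Fin (pp + kk)) :
    Continuous fun y : Fin m → ℝ => (Uᵀ *ᵥ (Fv - y)) z := by
  simp only [Matrix.mulVec, dotProduct, Pi.sub_apply]
  exact continuous_finset_sum _ fun j _ =>
    continuous_const.mul (continuous_const.sub (continuous_apply j))

lemma phiF_cont (lam : ℝ) : Continuous fun y => phiF q Fv σ μ U lam y := by
  unfold phiF
  have hbb : Continuous fun y : Fin m → ℝ => (Fv - y) ⬝ᵥ (Fv - y) := by
    simp only [dotProduct, Pi.sub_apply]
    exact continuous_finset_sum _ fun j _ =>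
      (continuous_const.sub (continuous_apply j)).mul (continuous_const.sub (continuous_apply j))
  refine ((continuous_const.mul hbb).sub ?_).sub ?_
  · exact continuous_finset_sum _ fun i _ =>
      continuous_const.mul ((mulVec_cont Fv U _).pow 2)
  · exact continuous_finset_sum _ fun j _ => (mulVec_cont Fv U _).pow 2

lemma phiF_contOn (hμ0 : ∀ i, 0 < μ i) (y : Fin m → ℝ) :
    ContinuousOn (fun lam => phiF q Fv σ μ U lam y) (Set.Ioi 0) := by
  unfold phiF
  refine (ContinuousOn.sub (ContinuousOn.sub continuousOn_const ?_) continuousOn_const)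
  exact continuousOn_finset_sum _ fun i _ =>
    ((hhA_contDiffOn (σ i) (μ i) (hμ0 i)).continuousOn).mul continuousOn_const

lemma phiF_contDiffOn (hμ0 : ∀ i, 0 < μ i) :
    ContDiffOn ℝ 1 (fun x : ℝ × (Fin m → ℝ) => phiF q Fv σ μ U x.1 x.2)
      {x : ℝ × (Fin m → ℝ) | 0 < x.1} := by
  unfold phiF
  have hbb : ContDiff ℝ 1 fun x : ℝ × (Fin m → ℝ) => (Fv - x.2) ⬝ᵥ (Fv - x.2) := by
    simp only [dotProduct, Pi.sub_apply]
    apply ContDiff.sum; intro j _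
    exact (contDiff_const.sub ((contDiff_pi.mp contDiff_snd) j)).mul
      (contDiff_const.sub ((contDiff_pi.mp contDiff_snd) j))
  have hc : ∀ z : Fin (pp + kk),
      ContDiff ℝ 1 fun x : ℝ × (Fin m → ℝ) => (Uᵀ *ᵥ (Fv - x.2)) z := by
    intro z
    simp only [Matrix.mulVec, dotProduct, Pi.sub_apply]
    apply ContDiff.sum; intro j _
    exact contDiff_const.mul (contDiff_const.sub ((contDiff_pi.mp contDiff_snd) j))
  have hhh : ∀ i : Fin pp, ContDiffOn ℝ 1
      (fun x : ℝ × (Fin m → ℝ) => hhA (σ i) (μ i) x.1) {x : ℝ × (Fin m → ℝ) | 0 < x.1} :=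
    fun i => (hhA_contDiffOn (σ i) (μ i) (hμ0 i)).comp contDiff_fst.contDiffOn
      (fun x hx => hx)
  refine ContDiffOn.sub (ContDiffOn.sub ((contDiff_const.mul hbb).contDiffOn) ?_) ?_
  · exact ContDiffOn.sum fun i _ => (hhh i).mul ((hc (finSumFinEquiv (Sum.inl i))).pow 2).contDiffOn
  · exact ContDiffOn.sum fun j _ => ((hc (finSumFinEquiv (Sum.inr j))).pow 2).contDiffOn

lemma phiF_hasDerivAt (y : Fin m → ℝ) {lam : ℝ} (hμ0 : ∀ i, 0 < μ i) (hlam : 0 < lam) :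
    HasDerivAt (fun l => phiF q Fv σ μ U l y)
      (-(∑ i : Fin pp, ((2 - 2 * (σ i ^ 2 / (σ i ^ 2 + lam * μ i ^ 2))) *
          ((0 * (σ i ^ 2 + lam * μ i ^ 2) - σ i ^ 2 * μ i ^ 2) / (σ i ^ 2 + lam * μ i ^ 2) ^ 2)) *
          ((Uᵀ *ᵥ (Fv - y)) (finSumFinEquiv (Sum.inl i))) ^ 2)) lam := by
  unfold phiF
  have hsum : HasDerivAt (fun l => ∑ i : Fin pp, hhA (σ i) (μ i) l *
        ((Uᵀ *ᵥ (Fv - y)) (finSumFinEquiv (Sum.inl i))) ^ 2)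
      (∑ i : Fin pp, ((2 - 2 * (σ i ^ 2 / (σ i ^ 2 + lam * μ i ^ 2))) *
          ((0 * (σ i ^ 2 + lam * μ i ^ 2) - σ i ^ 2 * μ i ^ 2) / (σ i ^ 2 + lam * μ i ^ 2) ^ 2)) *
          ((Uᵀ *ᵥ (Fv - y)) (finSumFinEquiv (Sum.inl i))) ^ 2) lam := by
    apply HasDerivAt.fun_sum
    intro i _
    exact (hhA_hasDerivAt (σ i) (μ i) lam (eA_pos (hμ0 i) hlam).ne').mul_const _
  have := ((hasDerivAt_const lam ((1 - q ^ 2) * ((Fv - y) ⬝ᵥ (Fv - y)))).fun_sub hsum).fun_sub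
    (hasDerivAt_const lam (∑ j : Fin kk, ((Uᵀ *ᵥ (Fv - y)) (finSumFinEquiv (Sum.inr j))) ^ 2))
  simpa using this

end phiF

lemma gram {a b c : Type*} [Fintype a] [Fintype b] [Fintype c] [DecidableEq b]
    (U : Matrix a b ℝ) (hU : Uᵀ * U = 1) (N₁ N₂ : Matrix b c ℝ) :
    (U * N₁)ᵀ * (U * N₂) = N₁ᵀ * N₂ := by
  rw [Matrix.transpose_mul, Matrix.mul_assoc, ← Matrix.mul_assoc Uᵀ U, hU, Matrix.one_mul]

lemma sandw {a b c : Type*} [Fintype a] [Fintype b] [Fintype c]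
    (Y : Matrix a c ℝ) (D₁ D₂ : Matrix b a ℝ) :
    (D₁ * Y)ᵀ * (D₂ * Y) = Yᵀ * (D₁ᵀ * D₂) * Y := by
  rw [Matrix.transpose_mul]; simp only [Matrix.mul_assoc]

lemma combine {a : Type*} [Fintype a] (Y S T : Matrix a a ℝ) (lam : ℝ) :
    Yᵀ * S * Y + lam • (Yᵀ * T * Y) = Yᵀ * (S + lam • T) * Y := by
  rw [Matrix.mul_add, Matrix.add_mul, Matrix.mul_smul, Matrix.smul_mul]

lemma dot_split {p k : ℕ} (f g : Fin (p + k) → ℝ) :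
    f ⬝ᵥ g = (∑ i : Fin p, f (finSumFinEquiv (Sum.inl i)) * g (finSumFinEquiv (Sum.inl i)))
      + ∑ j : Fin k, f (finSumFinEquiv (Sum.inr j)) * g (finSumFinEquiv (Sum.inr j)) := by
  rw [dotProduct, ← Equiv.sum_comp finSumFinEquiv (fun j => f j * g j), Fintype.sum_sum_type]

lemma expand_res {m n : Type*} [Fintype m] [Fintype n] [DecidableEq n] (U : Matrix m n ℝ)
    (hU : Uᵀ * U = 1) (b : m → ℝ) (w : n → ℝ) :
    (b - U *ᵥ w) ⬝ᵥ (b - U *ᵥ w) = b ⬝ᵥ b - 2 * ((Uᵀ *ᵥ b) ⬝ᵥ w) + w ⬝ᵥ w := by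
  have h1 : b ⬝ᵥ (U *ᵥ w) = (Uᵀ *ᵥ b) ⬝ᵥ w := by
    rw [dotProduct_mulVec, ← Matrix.mulVec_transpose]
  have h3 : (U *ᵥ w) ⬝ᵥ (U *ᵥ w) = w ⬝ᵥ w := by
    rw [dotProduct_mulVec, ← Matrix.mulVec_transpose, Matrix.mulVec_mulVec, hU, Matrix.one_mulVec]
  have h2 : (U *ᵥ w) ⬝ᵥ b = (Uᵀ *ᵥ b) ⬝ᵥ w := by rw [dotProduct_comm]; exact h1
  rw [sub_dotProduct, dotProduct_sub, dotProduct_sub, h1, h2, h3]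
  ring

lemma omega_rep (m p k : ℕ)
    (J : Matrix (Fin m) (Fin (p + k)) ℝ) (L : Matrix (Fin p) (Fin (p + k)) ℝ)
    (U : Matrix (Fin m) (Fin (p + k)) ℝ) (V : Matrix (Fin p) (Fin p) ℝ)
    (X : Matrix (Fin (p + k)) (Fin (p + k)) ℝ) (σ μ : Fin p → ℝ)
    (hU : Uᵀ * U = 1) (hV : Vᵀ * V = 1) (hX : IsUnit X.det)
    (hJ : J = U * (Matrix.fromBlocks (Matrix.diagonal σ) 0 0
              (1 : Matrix (Fin k) (Fin k) ℝ)).submatrix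
            finSumFinEquiv.symm finSumFinEquiv.symm * X⁻¹)
    (hL : L = V * (Matrix.fromCols (Matrix.diagonal μ)
              (0 : Matrix (Fin p) (Fin k) ℝ)).submatrix id finSumFinEquiv.symm * X⁻¹)
    (hμ0 : ∀ i, 0 < μ i) (Fv : Fin m → ℝ) (q : ℝ)
    (lam : ℝ) (hlam : 0 < lam) (y : Fin m → ℝ) :
    euclNorm (Fv - y + J *ᵥ (-((Jᵀ * J + lam • (Lᵀ * L))⁻¹ *ᵥ (Jᵀ *ᵥ (Fv - y))))) ^ 2
      - q ^ 2 * euclNorm (Fv - y) ^ 2 = phiF q Fv σ μ U lam y := by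
  have hepos : ∀ i, 0 < σ i * σ i + lam * (μ i * μ i) := fun i => by
    nlinarith [mul_self_nonneg (σ i), mul_pos hlam (mul_pos (hμ0 i) (hμ0 i))]
  set Ds : Matrix (Fin (p + k)) (Fin (p + k)) ℝ :=
    (fromBlocks (diagonal σ) 0 0 (1 : Matrix (Fin k) (Fin k) ℝ)).submatrix
      ⇑finSumFinEquiv.symm ⇑finSumFinEquiv.symm with hDs
  set Ns : Matrix (Fin p) (Fin (p + k)) ℝ :=
    (fromCols (diagonal μ) (0 : Matrix (Fin p) (Fin k) ℝ)).submatrix id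
      ⇑finSumFinEquiv.symm with hNs
  set Bs : Matrix (Fin (p + k)) (Fin (p + k)) ℝ :=
    (fromBlocks (diagonal fun i => σ i * σ i + lam * (μ i * μ i)) 0 0
      (1 : Matrix (Fin k) (Fin k) ℝ)).submatrix ⇑finSumFinEquiv.symm ⇑finSumFinEquiv.symm with hBs
  set Cs : Matrix (Fin (p + k)) (Fin (p + k)) ℝ :=
    (fromBlocks (diagonal fun i => (σ i * σ i + lam * (μ i * μ i))⁻¹) 0 0
      (1 : Matrix (Fin k) (Fin k) ℝ)).submatrix ⇑finSumFinEquiv.symm ⇑finSumFinEquiv.symm with hCs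
  set Gs : Matrix (Fin (p + k)) (Fin (p + k)) ℝ :=
    (fromBlocks (diagonal fun i => (σ i * σ i) * (σ i * σ i + lam * (μ i * μ i))⁻¹) 0 0
      (1 : Matrix (Fin k) (Fin k) ℝ)).submatrix ⇑finSumFinEquiv.symm ⇑finSumFinEquiv.symm with hGs
  have hXX : X⁻¹ * X = 1 := Matrix.nonsing_inv_mul X hX
  have hXXt : Xᵀ * X⁻¹ᵀ = 1 := by
    rw [← Matrix.transpose_mul, Matrix.nonsing_inv_mul X hX, Matrix.transpose_one]
  have hXtXt : X⁻¹ᵀ * Xᵀ = 1 := by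
    rw [← Matrix.transpose_mul, Matrix.mul_nonsing_inv X hX, Matrix.transpose_one]
  have hDst : Dsᵀ = Ds := by
    rw [hDs, transpose_submatrix, fromBlocks_transpose]; simp
  have hJ' : J = U * (Ds * X⁻¹) := by rw [hJ, Matrix.mul_assoc]
  have hL' : L = V * (Ns * X⁻¹) := by rw [hL, Matrix.mul_assoc]
  have hDD : Dsᵀ * Ds = (fromBlocks (diagonal fun i => σ i * σ i) 0 0
      (1 : Matrix (Fin k) (Fin k) ℝ)).submatrix ⇑finSumFinEquiv.symm ⇑finSumFinEquiv.symm := by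
    rw [hDst, hDs, submatrix_mul_equiv, fromBlocks_multiply]
    simp [diagonal_mul_diagonal]
  have hNN : Nsᵀ * Ns = (fromBlocks (diagonal fun i => μ i * μ i) 0 0
      (0 : Matrix (Fin k) (Fin k) ℝ)).submatrix ⇑finSumFinEquiv.symm ⇑finSumFinEquiv.symm := by
    rw [hNs, transpose_submatrix, transpose_fromCols]
    rw [show (id : Fin p → Fin p) = ⇑(Equiv.refl (Fin p)) from rfl]
    rw [submatrix_mul_equiv, fromRows_mul_fromCols]
    simp [diagonal_mul_diagonal]
  have hdiag : (diagonal fun i => σ i * σ i) + lam • (diagonal fun i => μ i * μ i)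
      = diagonal (fun i : Fin p => σ i * σ i + lam * (μ i * μ i)) := by
    ext a b
    rcases eq_or_ne a b with h | h
    · subst h; simp [Matrix.diagonal_apply_eq, Matrix.smul_apply, smul_eq_mul]
    · simp [Matrix.diagonal_apply_ne _ h, Matrix.smul_apply, h]
  have hfb : (fromBlocks (diagonal fun i => σ i * σ i) 0 0 (1 : Matrix (Fin k) (Fin k) ℝ))
      + lam • (fromBlocks (diagonal fun i => μ i * μ i) 0 0 (0 : Matrix (Fin k) (Fin k) ℝ))
      = fromBlocks (diagonal fun i => σ i * σ i + lam * (μ i * μ i)) 0 0 1 := by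
    rw [fromBlocks_smul, fromBlocks_add, hdiag]
    simp only [smul_zero, add_zero, zero_add]
  have hsub : Dsᵀ * Ds + lam • (Nsᵀ * Ns) = Bs := by
    rw [hDD, hNN, hBs, ← hfb]
    simp only [Matrix.submatrix_add, Matrix.submatrix_smul, Pi.add_apply, Pi.smul_apply]
  have hA : Jᵀ * J + lam • (Lᵀ * L) = X⁻¹ᵀ * Bs * X⁻¹ := by
    rw [hJ', hL', gram U hU, gram V hV, sandw, sandw, combine, hsub]
  have hBC : Bs * Cs = 1 := by
    rw [hBs, hCs, submatrix_mul_equiv, fromBlocks_multiply]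
    simp only [Matrix.mul_zero, Matrix.zero_mul, Matrix.mul_one, Matrix.one_mul, add_zero,
      zero_add, diagonal_mul_diagonal]
    rw [show (fun i => (σ i * σ i + lam * (μ i * μ i)) * (σ i * σ i + lam * (μ i * μ i))⁻¹)
        = fun _ => (1 : ℝ) from funext fun i => mul_inv_cancel₀ (hepos i).ne']
    rw [diagonal_one, Matrix.fromBlocks_one, submatrix_one_equiv]
  have hAinv : (Jᵀ * J + lam • (Lᵀ * L))⁻¹ = X * Cs * Xᵀ := by
    apply Matrix.inv_eq_right_inv
    rw [hA]
    simp only [Matrix.mul_assoc]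
    rw [← Matrix.mul_assoc X⁻¹ X, hXX, Matrix.one_mul, ← Matrix.mul_assoc Bs Cs, hBC,
      Matrix.one_mul, hXtXt]
  have hDCD : Ds * (Cs * Ds) = Gs := by
    rw [hDs, hCs, hGs, submatrix_mul_equiv, submatrix_mul_equiv, fromBlocks_multiply,
      fromBlocks_multiply]
    simp only [Matrix.mul_zero, Matrix.zero_mul, Matrix.mul_one, Matrix.one_mul, add_zero,
      zero_add, diagonal_mul_diagonal]
    rw [show (fun i => σ i * ((σ i * σ i + lam * (μ i * μ i))⁻¹ * σ i))
        = fun i => (σ i * σ i) * (σ i * σ i + lam * (μ i * μ i))⁻¹ from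
        funext fun i => by ring]
  have hJAJ : J * (Jᵀ * J + lam • (Lᵀ * L))⁻¹ * Jᵀ = U * Gs * Uᵀ := by
    rw [hAinv, hJ']
    simp only [Matrix.transpose_mul, hDst]
    simp only [Matrix.mul_assoc]
    rw [← Matrix.mul_assoc Xᵀ X⁻¹ᵀ, hXXt, Matrix.one_mul,
      ← Matrix.mul_assoc X⁻¹ X, hXX, Matrix.one_mul,
      ← Matrix.mul_assoc Cs Ds Uᵀ, ← Matrix.mul_assoc Ds (Cs * Ds) Uᵀ, hDCD]
  have hJd : J *ᵥ (-((Jᵀ * J + lam • (Lᵀ * L))⁻¹ *ᵥ (Jᵀ *ᵥ (Fv - y))))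
      = -(U *ᵥ (Gs *ᵥ (Uᵀ *ᵥ (Fv - y)))) := by
    rw [Matrix.mulVec_neg, Matrix.mulVec_mulVec, Matrix.mulVec_mulVec, hJAJ,
      ← Matrix.mulVec_mulVec, ← Matrix.mulVec_mulVec]
  have hw : Gs *ᵥ (Uᵀ *ᵥ (Fv - y)) =
      (Sum.elim
        (fun i => (σ i * σ i) * (σ i * σ i + lam * (μ i * μ i))⁻¹ *
          (Uᵀ *ᵥ (Fv - y)) (finSumFinEquiv (Sum.inl i)))
        (fun j => (Uᵀ *ᵥ (Fv - y)) (finSumFinEquiv (Sum.inr j)))) ∘ ⇑finSumFinEquiv.symm := by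
    rw [hGs, submatrix_mulVec_equiv]
    funext x
    simp only [Function.comp_apply, Equiv.symm_symm]
    generalize finSumFinEquiv.symm x = s
    rcases s with i | j <;>
      simp [fromBlocks_mulVec, Matrix.mulVec_diagonal, Matrix.zero_mulVec, Matrix.one_mulVec]
  unfold phiF
  rw [hJd, hw, ← sub_eq_add_neg, euclNorm_sq, euclNorm_sq]
  set cc : Fin (p + k) → ℝ := Uᵀ *ᵥ (Fv - y) with hcc
  set wS : Fin p ⊕ Fin k → ℝ := Sum.elim
    (fun i => σ i * σ i * (σ i * σ i + lam * (μ i * μ i))⁻¹ * cc (finSumFinEquiv (Sum.inl i)))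
    (fun j => cc (finSumFinEquiv (Sum.inr j))) with hwS
  rw [expand_res U hU (Fv - y) (wS ∘ ⇑finSumFinEquiv.symm), ← hcc]
  have hs1 : cc ⬝ᵥ (wS ∘ ⇑finSumFinEquiv.symm)
      = (∑ i : Fin p, cc (finSumFinEquiv (Sum.inl i)) *
          (σ i * σ i * (σ i * σ i + lam * (μ i * μ i))⁻¹ * cc (finSumFinEquiv (Sum.inl i))))
        + ∑ j : Fin k, cc (finSumFinEquiv (Sum.inr j)) * cc (finSumFinEquiv (Sum.inr j)) := by
    rw [dot_split]
    congr 1 <;> (apply Finset.sum_congr rfl; intro i _; simp [hwS])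
  have hs2 : (wS ∘ ⇑finSumFinEquiv.symm) ⬝ᵥ (wS ∘ ⇑finSumFinEquiv.symm)
      = (∑ i : Fin p, (σ i * σ i * (σ i * σ i + lam * (μ i * μ i))⁻¹ *
            cc (finSumFinEquiv (Sum.inl i))) *
          (σ i * σ i * (σ i * σ i + lam * (μ i * μ i))⁻¹ * cc (finSumFinEquiv (Sum.inl i))))
        + ∑ j : Fin k, cc (finSumFinEquiv (Sum.inr j)) * cc (finSumFinEquiv (Sum.inr j)) := by
    rw [dot_split]
    congr 1 <;> (apply Finset.sum_congr rfl; intro i _; simp [hwS])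
  rw [hs1, hs2]
  have hH : ∑ i : Fin p, hhA (σ i) (μ i) lam * cc (finSumFinEquiv (Sum.inl i)) ^ 2
      = 2 * (∑ i : Fin p, cc (finSumFinEquiv (Sum.inl i)) *
          (σ i * σ i * (σ i * σ i + lam * (μ i * μ i))⁻¹ * cc (finSumFinEquiv (Sum.inl i))))
        - ∑ i : Fin p, (σ i * σ i * (σ i * σ i + lam * (μ i * μ i))⁻¹ *
            cc (finSumFinEquiv (Sum.inl i))) *
          (σ i * σ i * (σ i * σ i + lam * (μ i * μ i))⁻¹ * cc (finSumFinEquiv (Sum.inl i))) := by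
    rw [Finset.mul_sum, ← Finset.sum_sub_distrib]
    apply Finset.sum_congr rfl; intro i _
    have he : (σ i * σ i + lam * (μ i * μ i)) ≠ 0 := (hepos i).ne'
    have h2 : σ i ^ 2 + lam * μ i ^ 2 = σ i * σ i + lam * (μ i * μ i) := by ring
    unfold hhA
    rw [h2]
    field_simp
  have hP : ∑ j : Fin k, cc (finSumFinEquiv (Sum.inr j)) ^ 2
      = ∑ j : Fin k, cc (finSumFinEquiv (Sum.inr j)) * cc (finSumFinEquiv (Sum.inr j)) := by
    apply Finset.sum_congr rfl; intro j _; rw [sq]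
  rw [hH, hP]
  ring

set_option maxHeartbeats 2000000 in
/-- Continuity of the regularization parameter `λ^q` with respect to the data: with
`d(λ, y) = −(JᵀJ + λLᵀL)⁻¹Jᵀ(F − y)` and
`ω(λ, y) = ‖F − y + J d(λ, y)‖² − q²‖F − y‖²`, if `ω(λ₀, y₀) = 0` with `λ₀ > 0` and some
generalized singular pair has `σᵢ > 0` and `(Uᵀ(F − y₀))ᵢ ≠ 0`, then `ω` is continuously
differentiable near `(λ₀, y₀)` with `∂ω/∂λ(λ₀, y₀) > 0`, and `λ^q` is implicitly defined
as a continuous function of `y` near `y₀`, uniquely. -/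
theorem lambda_q_continuous_in_data (m p k : ℕ) (hp : 0 < p) (hm : p + k ≤ m)
    (J : Matrix (Fin m) (Fin (p + k)) ℝ) (L : Matrix (Fin p) (Fin (p + k)) ℝ)
    (hker : ∀ v : Fin (p + k) → ℝ, J.mulVec v = 0 → L.mulVec v = 0 → v = 0)
    (U : Matrix (Fin m) (Fin (p + k)) ℝ) (V : Matrix (Fin p) (Fin p) ℝ)
    (X : Matrix (Fin (p + k)) (Fin (p + k)) ℝ) (σ μ : Fin p → ℝ)
    (hU : Uᵀ * U = 1) (hV : Vᵀ * V = 1) (hX : IsUnit X.det)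
    (hJ : J = U * (Matrix.fromBlocks (Matrix.diagonal σ) 0 0
              (1 : Matrix (Fin k) (Fin k) ℝ)).submatrix
            finSumFinEquiv.symm finSumFinEquiv.symm * X⁻¹)
    (hL : L = V * (Matrix.fromCols (Matrix.diagonal μ)
              (0 : Matrix (Fin p) (Fin k) ℝ)).submatrix id finSumFinEquiv.symm * X⁻¹)
    (hσ0 : ∀ i, 0 ≤ σ i) (hσ1 : ∀ i, σ i ≤ 1) (hμ0 : ∀ i, 0 < μ i) (hμ1 : ∀ i, μ i ≤ 1)
    (hσμ : ∀ i, σ i ^ 2 + μ i ^ 2 = 1)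
    (Fv : Fin m → ℝ) (q : ℝ) (hq0 : 0 < q) (hq1 : q < 1)
    (d : ℝ → (Fin m → ℝ) → Fin (p + k) → ℝ)
    (hd : ∀ (lam : ℝ) (y : Fin m → ℝ),
      d lam y = -((Jᵀ * J + lam • (Lᵀ * L))⁻¹.mulVec (Jᵀ.mulVec (Fv - y))))
    (ω : ℝ × (Fin m → ℝ) → ℝ)
    (hω : ∀ (lam : ℝ) (y : Fin m → ℝ),
      ω (lam, y) = euclNorm (Fv - y + J.mulVec (d lam y)) ^ 2 - q ^ 2 * euclNorm (Fv - y) ^ 2)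
    (lam₀ : ℝ) (hlam₀ : 0 < lam₀) (y₀ : Fin m → ℝ)
    (hroot : ω (lam₀, y₀) = 0)
    (hidx : ∃ i : Fin p, 0 < σ i ∧
      Uᵀ.mulVec (Fv - y₀) (finSumFinEquiv (Sum.inl i)) ≠ 0) :
    (∃ s : Set (ℝ × (Fin m → ℝ)), s ∈ nhds (lam₀, y₀) ∧ ContDiffOn ℝ 1 ω s) ∧
    0 < deriv (fun lam : ℝ => ω (lam, y₀)) lam₀ ∧
    ∃ (s : Set (Fin m → ℝ)) (t : Set ℝ), IsOpen s ∧ y₀ ∈ s ∧ IsOpen t ∧ lam₀ ∈ t ∧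
      ∃ g : (Fin m → ℝ) → ℝ,
        (ContinuousOn g s ∧ g y₀ = lam₀ ∧ ∀ y ∈ s, g y ∈ t ∧ ω (g y, y) = 0) ∧
        ∀ g' : (Fin m → ℝ) → ℝ,
          (ContinuousOn g' s ∧ g' y₀ = lam₀ ∧ ∀ y ∈ s, g' y ∈ t ∧ ω (g' y, y) = 0) →
          ∀ y ∈ s, g' y = g y := by
  obtain ⟨i₀, hσi₀, hc₀⟩ := hidx
  have hrep : ∀ lam : ℝ, 0 < lam → ∀ y : Fin m → ℝ, ω (lam, y) = phiF q Fv σ μ U lam y := by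
    intro lam hl y
    rw [hω lam y, hd lam y]
    exact omega_rep m p k J L U V X σ μ hU hV hX hJ hL hμ0 Fv q lam hl y
  have hroot₀ : phiF q Fv σ μ U lam₀ y₀ = 0 := by rw [← hrep lam₀ hlam₀ y₀]; exact hroot
  refine ⟨⟨{x : ℝ × (Fin m → ℝ) | 0 < x.1},
      (isOpen_lt continuous_const continuous_fst).mem_nhds hlam₀,
      (phiF_contDiffOn q Fv σ μ U hμ0).congr fun x hx => by
        obtain ⟨l, yy⟩ := x; exact hrep l hx yy⟩, ?_, ?_⟩
  · -- derivative positivity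
    have heq : (fun lam => ω (lam, y₀)) =ᶠ[nhds lam₀] fun lam => phiF q Fv σ μ U lam y₀ := by
      filter_upwards [eventually_gt_nhds hlam₀] with lam hl
      exact hrep lam hl y₀
    rw [heq.deriv_eq, (phiF_hasDerivAt q Fv σ μ U y₀ hμ0 hlam₀).deriv]
    have hterm : ∀ i : Fin p,
        ((2 - 2 * (σ i ^ 2 / (σ i ^ 2 + lam₀ * μ i ^ 2))) *
          ((0 * (σ i ^ 2 + lam₀ * μ i ^ 2) - σ i ^ 2 * μ i ^ 2) /
            (σ i ^ 2 + lam₀ * μ i ^ 2) ^ 2)) *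
          ((Uᵀ *ᵥ (Fv - y₀)) (finSumFinEquiv (Sum.inl i))) ^ 2 ≤ 0 := by
      intro i
      have he : 0 < σ i ^ 2 + lam₀ * μ i ^ 2 := eA_pos (hμ0 i) hlam₀
      have hg : σ i ^ 2 / (σ i ^ 2 + lam₀ * μ i ^ 2) ≤ 1 := by
        rw [div_le_one he]; nlinarith [mul_pos hlam₀ (pow_pos (hμ0 i) 2)]
      have h2 : (0 * (σ i ^ 2 + lam₀ * μ i ^ 2) - σ i ^ 2 * μ i ^ 2) /
          (σ i ^ 2 + lam₀ * μ i ^ 2) ^ 2 ≤ 0 := by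
        apply div_nonpos_of_nonpos_of_nonneg
        · nlinarith [sq_nonneg (σ i), sq_nonneg (μ i)]
        · positivity
      have h1 : 0 ≤ 2 - 2 * (σ i ^ 2 / (σ i ^ 2 + lam₀ * μ i ^ 2)) := by linarith
      nlinarith [mul_nonneg (mul_nonneg h1 (neg_nonneg.2 h2))
        (sq_nonneg ((Uᵀ *ᵥ (Fv - y₀)) (finSumFinEquiv (Sum.inl i))))]
    have hterm₀ :
        ((2 - 2 * (σ i₀ ^ 2 / (σ i₀ ^ 2 + lam₀ * μ i₀ ^ 2))) *
          ((0 * (σ i₀ ^ 2 + lam₀ * μ i₀ ^ 2) - σ i₀ ^ 2 * μ i₀ ^ 2) /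
            (σ i₀ ^ 2 + lam₀ * μ i₀ ^ 2) ^ 2)) *
          ((Uᵀ *ᵥ (Fv - y₀)) (finSumFinEquiv (Sum.inl i₀))) ^ 2 < 0 := by
      have he : 0 < σ i₀ ^ 2 + lam₀ * μ i₀ ^ 2 := eA_pos (hμ0 i₀) hlam₀
      have hg : σ i₀ ^ 2 / (σ i₀ ^ 2 + lam₀ * μ i₀ ^ 2) < 1 := by
        rw [div_lt_one he]; nlinarith [mul_pos hlam₀ (pow_pos (hμ0 i₀) 2)]
      have h2 : (0 * (σ i₀ ^ 2 + lam₀ * μ i₀ ^ 2) - σ i₀ ^ 2 * μ i₀ ^ 2) /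
          (σ i₀ ^ 2 + lam₀ * μ i₀ ^ 2) ^ 2 < 0 := by
        apply div_neg_of_neg_of_pos
        · nlinarith [mul_pos (pow_pos hσi₀ 2) (pow_pos (hμ0 i₀) 2)]
        · positivity
      have h1 : 0 < 2 - 2 * (σ i₀ ^ 2 / (σ i₀ ^ 2 + lam₀ * μ i₀ ^ 2)) := by linarith
      have hcpos : 0 < ((Uᵀ *ᵥ (Fv - y₀)) (finSumFinEquiv (Sum.inl i₀))) ^ 2 :=
        lt_of_le_of_ne (sq_nonneg _) (Ne.symm (pow_ne_zero 2 hc₀))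
      exact mul_neg_of_neg_of_pos (mul_neg_of_pos_of_neg h1 h2) hcpos
    have hsum : ∑ i : Fin p,
        ((2 - 2 * (σ i ^ 2 / (σ i ^ 2 + lam₀ * μ i ^ 2))) *
          ((0 * (σ i ^ 2 + lam₀ * μ i ^ 2) - σ i ^ 2 * μ i ^ 2) /
            (σ i ^ 2 + lam₀ * μ i ^ 2) ^ 2)) *
          ((Uᵀ *ᵥ (Fv - y₀)) (finSumFinEquiv (Sum.inl i))) ^ 2 < 0 := by
      have := Finset.sum_lt_sum (f := fun i : Fin p =>
          ((2 - 2 * (σ i ^ 2 / (σ i ^ 2 + lam₀ * μ i ^ 2))) *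
            ((0 * (σ i ^ 2 + lam₀ * μ i ^ 2) - σ i ^ 2 * μ i ^ 2) /
              (σ i ^ 2 + lam₀ * μ i ^ 2) ^ 2)) *
            ((Uᵀ *ᵥ (Fv - y₀)) (finSumFinEquiv (Sum.inl i))) ^ 2)
        (g := fun _ : Fin p => (0:ℝ)) (s := Finset.univ)
        (fun i _ => hterm i) ⟨i₀, Finset.mem_univ _, hterm₀⟩
      simpa using this
    linarith
  · -- implicit function
    have hIcc : Set.Icc (3 * lam₀ / 4) (5 * lam₀ / 4) ⊆ Set.Ioi (0:ℝ) := by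
      intro x hx
      have := hx.1
      simp only [Set.mem_Ioi]
      linarith
    have hss_open : IsOpen {y : Fin m → ℝ | phiF q Fv σ μ U (3 * lam₀ / 4) y < 0 ∧
        0 < phiF q Fv σ μ U (5 * lam₀ / 4) y ∧
        (Uᵀ *ᵥ (Fv - y)) (finSumFinEquiv (Sum.inl i₀)) ≠ 0} := by
      simp only [Set.setOf_and]
      exact ((isOpen_lt (phiF_cont q Fv σ μ U _) continuous_const).inter
        ((isOpen_lt continuous_const (phiF_cont q Fv σ μ U _)).inter
          (isOpen_ne_fun (mulVec_cont Fv U _) continuous_const)))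
    have hy₀s : y₀ ∈ {y : Fin m → ℝ | phiF q Fv σ μ U (3 * lam₀ / 4) y < 0 ∧
        0 < phiF q Fv σ μ U (5 * lam₀ / 4) y ∧
        (Uᵀ *ᵥ (Fv - y)) (finSumFinEquiv (Sum.inl i₀)) ≠ 0} := by
      refine ⟨?_, ?_, hc₀⟩
      · have := phiF_strict q Fv σ μ U hσ0 hμ0 i₀ hσi₀ y₀ hc₀
          (a := 3 * lam₀ / 4) (b := lam₀) (by linarith) (by linarith)
        rw [hroot₀] at this; exact this
      · have := phiF_strict q Fv σ μ U hσ0 hμ0 i₀ hσi₀ y₀ hc₀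
          (a := lam₀) (b := 5 * lam₀ / 4) hlam₀ (by linarith)
        rw [hroot₀] at this; exact this
    have hexist : ∀ y ∈ {y : Fin m → ℝ | phiF q Fv σ μ U (3 * lam₀ / 4) y < 0 ∧
        0 < phiF q Fv σ μ U (5 * lam₀ / 4) y ∧
        (Uᵀ *ᵥ (Fv - y)) (finSumFinEquiv (Sum.inl i₀)) ≠ 0},
        ∃ lam : ℝ, lam ∈ Set.Ioo (3 * lam₀ / 4) (5 * lam₀ / 4) ∧
          phiF q Fv σ μ U lam y = 0 := by
      intro y hy
      have hcont : ContinuousOn (fun lam => phiF q Fv σ μ U lam y)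
          (Set.Icc (3 * lam₀ / 4) (5 * lam₀ / 4)) :=
        (phiF_contOn q Fv σ μ U hμ0 y).mono hIcc
      have hzm : (0:ℝ) ∈ Set.Ioo (phiF q Fv σ μ U (3 * lam₀ / 4) y)
          (phiF q Fv σ μ U (5 * lam₀ / 4) y) := ⟨hy.1, hy.2.1⟩
      obtain ⟨lam, hl, hval⟩ := intermediate_value_Ioo (by linarith) hcont hzm
      exact ⟨lam, hl, hval⟩
    choose! g hg1 hg2 using hexist
    have htpos : ∀ x ∈ Set.Ioo (lam₀ / 2) (2 * lam₀), (0:ℝ) < x := by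
      intro x hx
      have := hx.1
      linarith
    have huniq : ∀ y : Fin m → ℝ, (Uᵀ *ᵥ (Fv - y)) (finSumFinEquiv (Sum.inl i₀)) ≠ 0 →
        ∀ l1 ∈ Set.Ioo (lam₀ / 2) (2 * lam₀), ∀ l2 ∈ Set.Ioo (lam₀ / 2) (2 * lam₀),
          phiF q Fv σ μ U l1 y = 0 → phiF q Fv σ μ U l2 y = 0 → l1 = l2 := by
      intro y hcy l1 h1 l2 h2 hv1 hv2
      rcases lt_trichotomy l1 l2 with h | h | h
      · have := phiF_strict q Fv σ μ U hσ0 hμ0 i₀ hσi₀ y hcy (htpos l1 h1) h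
        rw [hv1, hv2] at this
        exact absurd this (lt_irrefl 0)
      · exact h
      · have := phiF_strict q Fv σ μ U hσ0 hμ0 i₀ hσi₀ y hcy (htpos l2 h2) h
        rw [hv1, hv2] at this
        exact absurd this (lt_irrefl 0)
    have hsubt : Set.Ioo (3 * lam₀ / 4) (5 * lam₀ / 4) ⊆ Set.Ioo (lam₀ / 2) (2 * lam₀) := by
      intro x hx
      obtain ⟨hx1, hx2⟩ := hx
      exact ⟨by linarith, by linarith⟩
    have hgmem : ∀ y ∈ {y : Fin m → ℝ | phiF q Fv σ μ U (3 * lam₀ / 4) y < 0 ∧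
        0 < phiF q Fv σ μ U (5 * lam₀ / 4) y ∧
        (Uᵀ *ᵥ (Fv - y)) (finSumFinEquiv (Sum.inl i₀)) ≠ 0},
        g y ∈ Set.Ioo (lam₀ / 2) (2 * lam₀) := fun y hy => hsubt (hg1 y hy)
    have hgpos : ∀ y ∈ {y : Fin m → ℝ | phiF q Fv σ μ U (3 * lam₀ / 4) y < 0 ∧
        0 < phiF q Fv σ μ U (5 * lam₀ / 4) y ∧
        (Uᵀ *ᵥ (Fv - y)) (finSumFinEquiv (Sum.inl i₀)) ≠ 0},
        0 < g y := fun y hy => htpos _ (hgmem y hy)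
    have hgy₀ : g y₀ = lam₀ :=
      huniq y₀ hc₀ (g y₀) (hgmem y₀ hy₀s) lam₀ ⟨by linarith, by linarith⟩
        (hg2 y₀ hy₀s) hroot₀
    have hgcont : ContinuousOn g {y : Fin m → ℝ | phiF q Fv σ μ U (3 * lam₀ / 4) y < 0 ∧
        0 < phiF q Fv σ μ U (5 * lam₀ / 4) y ∧
        (Uᵀ *ᵥ (Fv - y)) (finSumFinEquiv (Sum.inl i₀)) ≠ 0} := by
      apply continuousOn_of_forall_continuousAt
      intro y₁ hy₁
      have : Filter.Tendsto g (nhds y₁) (nhds (g y₁)) := by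
        apply tendsto_order.mpr
        constructor
        · intro a' ha'
          rcases le_or_gt a' (3 * lam₀ / 4) with hA | hA
          · filter_upwards [hss_open.mem_nhds hy₁] with y hy
            have := (hg1 y hy).1
            linarith
          · have ha'pos : 0 < a' := by linarith
            have ha'lt : a' < g y₁ := ha'
            have hlt : phiF q Fv σ μ U a' y₁ < 0 := by
              have := phiF_strict q Fv σ μ U hσ0 hμ0 i₀ hσi₀ y₁ hy₁.2.2 ha'pos ha'lt
              rw [hg2 y₁ hy₁] at this
              exact this
            filter_upwards [hss_open.mem_nhds hy₁,
              (isOpen_lt (phiF_cont q Fv σ μ U a') continuous_const).mem_nhds hlt]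
              with y hy hylt
            by_contra hcon
            push_neg at hcon
            have := phiF_mono q Fv σ μ U hσ0 hμ0 (hgpos y hy) hcon y
            rw [hg2 y hy] at this
            exact absurd (lt_of_le_of_lt this hylt) (lt_irrefl 0)
        · intro b' hb'
          rcases le_or_gt (5 * lam₀ / 4) b' with hB | hB
          · filter_upwards [hss_open.mem_nhds hy₁] with y hy
            have := (hg1 y hy).2
            linarith
          · have hgt : 0 < phiF q Fv σ μ U b' y₁ := by
              have := phiF_strict q Fv σ μ U hσ0 hμ0 i₀ hσi₀ y₁ hy₁.2.2 (hgpos y₁ hy₁) hb'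
              rw [hg2 y₁ hy₁] at this
              exact this
            filter_upwards [hss_open.mem_nhds hy₁,
              (isOpen_lt continuous_const (phiF_cont q Fv σ μ U b')).mem_nhds hgt]
              with y hy hygt
            by_contra hcon
            push_neg at hcon
            have hb'pos : 0 < b' := lt_trans (hgpos y₁ hy₁) hb'
            have := phiF_mono q Fv σ μ U hσ0 hμ0 hb'pos hcon y
            rw [hg2 y hy] at this
            exact absurd (lt_of_lt_of_le hygt this) (lt_irrefl 0)
      exact this
    refine ⟨_, Set.Ioo (lam₀ / 2) (2 * lam₀), hss_open, hy₀s, isOpen_Ioo,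
      ⟨by linarith, by linarith⟩, g,
      ⟨hgcont, hgy₀, fun y hy => ⟨hgmem y hy, by
        rw [hrep (g y) (hgpos y hy) y]; exact hg2 y hy⟩⟩, ?_⟩
    rintro g' ⟨hg'c, hg'0, hg'p⟩ y hy
    have h1 := hg'p y hy
    have hg'pos : 0 < g' y := htpos _ h1.1
    have hphi : phiF q Fv σ μ U (g' y) y = 0 := by
      rw [← hrep (g' y) hg'pos y]
      exact h1.2
    exact huniq y hy.2.2 (g' y) h1.1 (g y) (hgmem y hy) hphi (hg2 y hy)
end

section
/- (Gain estimate, second inequality) Let J ∈ ℝ^{m×n}, L ∈ ℝ^{p×n}, x, x* ∈ ℝⁿ, F, y^δ ∈ ℝ^m, λ > 0, θ > 1, q ∈ (0,1). Suppose d ∈ ℝⁿ satisfies (JᵀJ + λ LᵀL) d = −Jᵀ(F − y^δ), that ‖F − y^δ + J d‖ = q‖F − y^δ‖, and that ‖F − y^δ + J(x* − x)‖ ≤ (q/θ)‖F − y^δ‖. Set x⁺ := x + d. Then ‖x − x*‖_L² − ‖x⁺ − x*‖_L² ≥ (2(θ−1)/(θλ))·‖F − y^δ + J d‖² = (2(θ−1)q²/(θλ))·‖F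 − y^δ‖². -/
open Matrix

lemma euclNorm_nonneg {k : ℕ} (v : Fin k → ℝ) : 0 ≤ euclNorm v := norm_nonneg _

lemma inner_eq_dot {k : ℕ} (u v : Fin k → ℝ) :
    (inner ℝ ((EuclideanSpace.equiv (Fin k) ℝ).symm u) ((EuclideanSpace.equiv (Fin k) ℝ).symm v) : ℝ)
      = u ⬝ᵥ v := by
  simp [PiLp.inner_apply, dotProduct, mul_comm]

lemma dot_le_norms {k : ℕ} (u v : Fin k → ℝ) : u ⬝ᵥ v ≤ euclNorm u * euclNorm v := by
  rw [← inner_eq_dot]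
  exact real_inner_le_norm _ _

/-- Gain estimate, second inequality: under the same hypotheses as the first gain
estimate, `‖x − x*‖_L² − ‖x⁺ − x*‖_L² ≥ (2(θ−1)/(θλ))‖F − yδ + Jd‖²
= (2(θ−1)q²/(θλ))‖F − yδ‖²`. -/
theorem gain_estimate_second (m n p : ℕ)
    (J : Matrix (Fin m) (Fin n) ℝ) (L : Matrix (Fin p) (Fin n) ℝ)
    (x xstar : Fin n → ℝ) (F yδ : Fin m → ℝ)
    (lam θ q : ℝ) (hlam : 0 < lam) (hθ : 1 < θ) (hq0 : 0 < q) (hq1 : q < 1)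
    (d : Fin n → ℝ)
    (hd : (Jᵀ * J + lam • (Lᵀ * L)).mulVec d = -(Jᵀ.mulVec (F - yδ)))
    (hqc : euclNorm (F - yδ + J.mulVec d) = q * euclNorm (F - yδ))
    (hnear : euclNorm (F - yδ + J.mulVec (xstar - x)) ≤ (q / θ) * euclNorm (F - yδ)) :
    euclNorm (L.mulVec (x - xstar)) ^ 2 - euclNorm (L.mulVec (x + d - xstar)) ^ 2 ≥
      (2 * (θ - 1) / (θ * lam)) * euclNorm (F - yδ + J.mulVec d) ^ 2 ∧
    (2 * (θ - 1) / (θ * lam)) * euclNorm (F - yδ + J.mulVec d) ^ 2 =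
      (2 * (θ - 1) * q ^ 2 / (θ * lam)) * euclNorm (F - yδ) ^ 2 := by
  set r : Fin m → ℝ := F - yδ with hr
  set s : Fin m → ℝ := r + J.mulVec d with hs
  set e : Fin n → ℝ := x - xstar with he
  set w : Fin m → ℝ := r + J.mulVec (xstar - x) with hw
  have hθ0 : (0:ℝ) < θ := lt_trans zero_lt_one hθ
  -- normal equation rewritten: Jᵀ s = -(lam • (LᵀL) d)
  have hns : Jᵀ.mulVec s = -(lam • (Lᵀ * L).mulVec d) := by
    have h1 : (Jᵀ * J).mulVec d + lam • (Lᵀ * L).mulVec d = -(Jᵀ.mulVec r) := by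
      rw [← Matrix.smul_mulVec, ← Matrix.add_mulVec]
      exact hd
    have h2 : Jᵀ.mulVec s = Jᵀ.mulVec r + (Jᵀ * J).mulVec d := by
      rw [hs, Matrix.mulVec_add, ← Matrix.mulVec_mulVec]
    rw [h2]
    linear_combination (norm := module) h1
  -- key identity: lam * ⟨Ld, Lv⟩ = -⟨s, Jv⟩
  have key : ∀ v : Fin n → ℝ, lam * (L.mulVec d ⬝ᵥ L.mulVec v) = -(s ⬝ᵥ J.mulVec v) := by
    intro v
    have h1 : L.mulVec d ⬝ᵥ L.mulVec v = (Lᵀ * L).mulVec d ⬝ᵥ v := by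
      rw [Matrix.dotProduct_mulVec, ← Matrix.mulVec_transpose, Matrix.mulVec_mulVec]
    have h2 : s ⬝ᵥ J.mulVec v = Jᵀ.mulVec s ⬝ᵥ v := by
      rw [Matrix.dotProduct_mulVec, ← Matrix.mulVec_transpose]
    rw [h1, h2, hns]
    simp [neg_dotProduct, smul_dotProduct]
  -- vector identities
  have hxd : x + d - xstar = e + d := by rw [he]; abel
  have hJe : J.mulVec e = r - w := by
    rw [hw, he]
    have : J.mulVec (xstar - x) = -(J.mulVec (x - xstar)) := by
      rw [← Matrix.mulVec_neg]; congr 1; abel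
    rw [this]; abel
  have hJd : J.mulVec d = s - r := by rw [hs]; abel
  -- expand the seminorm difference
  have hexp : euclNorm (L.mulVec e) ^ 2 - euclNorm (L.mulVec (e + d)) ^ 2
      = -(2 * (L.mulVec d ⬝ᵥ L.mulVec e)) - L.mulVec d ⬝ᵥ L.mulVec d := by
    rw [euclNorm_sq, euclNorm_sq, Matrix.mulVec_add]
    simp only [add_dotProduct, dotProduct_add]
    rw [dotProduct_comm (L.mulVec e) (L.mulVec d)]
    ring
  have ke := key e
  have kd := key d
  rw [hJe] at ke
  rw [hJd] at kd
  -- dot product expansions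
  have hsr : s ⬝ᵥ (r - w) = s ⬝ᵥ r - s ⬝ᵥ w := dotProduct_sub s r w
  have hss : s ⬝ᵥ (s - r) = s ⬝ᵥ s - s ⬝ᵥ r := dotProduct_sub s s r
  have hLd : 0 ≤ L.mulVec d ⬝ᵥ L.mulVec d := by
    rw [← euclNorm_sq]; positivity
  have hsw : s ⬝ᵥ w ≤ euclNorm s * euclNorm w := dot_le_norms s w
  have hS : s ⬝ᵥ s = euclNorm s ^ 2 := (euclNorm_sq s).symm
  have hnsn : 0 ≤ euclNorm s := euclNorm_nonneg s
  have hnwn : 0 ≤ euclNorm w := euclNorm_nonneg w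
  have hθw : θ * euclNorm w ≤ euclNorm s := by
    calc θ * euclNorm w ≤ θ * ((q / θ) * euclNorm r) := by
          exact mul_le_mul_of_nonneg_left hnear (le_of_lt hθ0)
      _ = q * euclNorm r := by field_simp
      _ = euclNorm s := hqc.symm
  set A := L.mulVec d ⬝ᵥ L.mulVec e with hA
  set B := L.mulVec d ⬝ᵥ L.mulVec d with hB
  have p1 : lam * (-(2 * A) - B) = s ⬝ᵥ r + s ⬝ᵥ s - 2 * (s ⬝ᵥ w) := by
    rw [hsr] at ke; rw [hss] at kd; ring_nf; linarith [ke, kd]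
  have p2 : euclNorm s ^ 2 ≤ s ⬝ᵥ r := by
    have := mul_nonneg hlam.le hLd
    rw [hss] at kd; rw [← hS]; linarith [kd]
  have p4 : θ * euclNorm s ^ 2 ≤ θ * (s ⬝ᵥ r) := mul_le_mul_of_nonneg_left p2 hθ0.le
  have p5 : θ * (s ⬝ᵥ w) ≤ euclNorm s ^ 2 := by
    calc θ * (s ⬝ᵥ w) ≤ θ * (euclNorm s * euclNorm w) :=
            mul_le_mul_of_nonneg_left hsw hθ0.le
      _ = euclNorm s * (θ * euclNorm w) := by ring
      _ ≤ euclNorm s * euclNorm s := mul_le_mul_of_nonneg_left hθw hnsn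
      _ = euclNorm s ^ 2 := by ring
  have p6 : (-(2 * A) - B) * (θ * lam)
      = θ * (s ⬝ᵥ r) + θ * (s ⬝ᵥ s) - 2 * (θ * (s ⬝ᵥ w)) := by
    linear_combination θ * p1
  constructor
  · rw [hxd, ge_iff_le, div_mul_eq_mul_div, div_le_iff₀ (mul_pos hθ0 hlam), hexp, p6]
    have hss2 : θ * (s ⬝ᵥ s) = θ * euclNorm s ^ 2 := by rw [hS]
    linarith [p4, p5]
  · rw [hqc]; ring
end

section
/- Let F : ℝⁿ → ℝᵐ be continuously differentiable with Jacobian J(x), L ∈ ℝ^{p×n}, y ∈ ℝᵐ, c > 0. Let x* satisfy F(x*) = y and suppose the TCC-L inequality ‖J(x)(x*−x) − F(x*) + F(x)‖ ≤ c‖x*−x‖_L ‖F(x*)−F(x)‖ holds at the point x = x_k. Let λ_k > 0 and suppose J(x_k)ᵀJ(x_k) + λ_k LᵀL is invertible, and define x_{k+1} := x_k − (J(x_k)ᵀJ(x_k) + λ_k LᵀL)⁻¹ J(x_k)ᵀ(F(x_k) − y). Then ‖x_{k+1} − x*‖ ≤ ‖(J(x_k)ᵀJ(x_k) + λ_k LᵀL)⁻¹‖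 · ( ‖J(x_k)ᵀ‖·c·‖F(x_k) − y‖ + λ_k‖Lᵀ‖ ) · ‖x_k − x*‖_L. -/
open Matrix

/-- Spectral (operator) norm of a real matrix with respect to Euclidean norms. -/
noncomputable def specNorm {a b : ℕ} (A : Matrix (Fin a) (Fin b) ℝ) : ℝ :=
  ‖(Matrix.toEuclideanLin A).toContinuousLinearMap‖

lemma specNorm_nonneg {a b : ℕ} (A : Matrix (Fin a) (Fin b) ℝ) : 0 ≤ specNorm A :=
  norm_nonneg _

lemma euclNorm_mulVec_le {a b : ℕ} (A : Matrix (Fin a) (Fin b) ℝ) (v : Fin b → ℝ) :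
    euclNorm (A.mulVec v) ≤ specNorm A * euclNorm v := by
  have : euclNorm (A.mulVec v) =
      ‖(Matrix.toEuclideanLin A).toContinuousLinearMap
        ((EuclideanSpace.equiv (Fin b) ℝ).symm v)‖ := rfl
  rw [this]
  exact ContinuousLinearMap.le_opNorm _ _

lemma euclNorm_add_le {k : ℕ} (u v : Fin k → ℝ) :
    euclNorm (u + v) ≤ euclNorm u + euclNorm v := by
  simpa [euclNorm, map_add] using
    norm_add_le ((EuclideanSpace.equiv (Fin k) ℝ).symm u)
      ((EuclideanSpace.equiv (Fin k) ℝ).symm v)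

lemma euclNorm_smul {k : ℕ} (c : ℝ) (v : Fin k → ℝ) :
    euclNorm (c • v) = |c| * euclNorm v := by
  simp [euclNorm, _root_.map_smul, norm_smul]

lemma euclNorm_neg {k : ℕ} (v : Fin k → ℝ) : euclNorm (-v) = euclNorm v := by
  simp [euclNorm, map_neg]

/-- One-step bound of the Euclidean error by the `L`-seminorm error: if the TCC-L
inequality holds at `x_k` (against a solution `x*` of `F(x) = y`) and
`x_{k+1} = x_k − (J_kᵀJ_k + λ_k LᵀL)⁻¹ J_kᵀ(F(x_k) − y)`, then
`‖x_{k+1} − x*‖ ≤ ‖(J_kᵀJ_k + λ_k LᵀL)⁻¹‖(‖J_kᵀ‖·c·‖F(x_k) − y‖ + λ_k‖Lᵀ‖)‖x_k − x*‖_L`. -/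
theorem lmmss_euclidean_bound_by_seminorm (n m p : ℕ)
    (F : (Fin n → ℝ) → (Fin m → ℝ)) (J : (Fin n → ℝ) → Matrix (Fin m) (Fin n) ℝ)
    (hF : ContDiff ℝ 1 F)
    (hJ : ∀ x, HasFDerivAt F ((J x).mulVecLin.toContinuousLinearMap) x)
    (L : Matrix (Fin p) (Fin n) ℝ) (y : Fin m → ℝ) (c : ℝ) (hc : 0 < c)
    (xstar : Fin n → ℝ) (hxstar : F xstar = y)
    (xk : Fin n → ℝ)
    (htcc : euclNorm ((J xk).mulVec (xstar - xk) - F xstar + F xk) ≤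
      c * euclNorm (L.mulVec (xstar - xk)) * euclNorm (F xstar - F xk))
    (lamk : ℝ) (hlamk : 0 < lamk)
    (hinv : IsUnit ((J xk)ᵀ * J xk + lamk • (Lᵀ * L)).det)
    (xnext : Fin n → ℝ)
    (hnext : xnext = xk -
      ((J xk)ᵀ * J xk + lamk • (Lᵀ * L))⁻¹.mulVec ((J xk)ᵀ.mulVec (F xk - y))) :
    euclNorm (xnext - xstar) ≤
      specNorm (((J xk)ᵀ * J xk + lamk • (Lᵀ * L))⁻¹) *
        (specNorm ((J xk)ᵀ) * c * euclNorm (F xk - y) + lamk * specNorm Lᵀ) *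
        euclNorm (L.mulVec (xk - xstar)) := by
  set A := (J xk)ᵀ * J xk + lamk • (Lᵀ * L) with hA
  set e : Fin n → ℝ := xk - xstar with he
  set r : Fin m → ℝ := (J xk).mulVec e - (F xk - F xstar) with hr
  have hAinv : A⁻¹ * A = 1 := Matrix.nonsing_inv_mul A hinv
  -- key identity
  have hkey : xnext - xstar =
      A⁻¹.mulVec ((J xk)ᵀ.mulVec r + lamk • (Lᵀ.mulVec (L.mulVec e))) := by
    have h1 : (J xk)ᵀ.mulVec r + lamk • (Lᵀ.mulVec (L.mulVec e)) =
        A.mulVec e - (J xk)ᵀ.mulVec (F xk - y) := by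
      rw [hr, hA, ← hxstar]
      simp [Matrix.add_mulVec, Matrix.smul_mulVec, Matrix.mulVec_smul,
        ← Matrix.mulVec_mulVec, Matrix.mulVec_sub]
      abel
    rw [h1, Matrix.mulVec_sub, Matrix.mulVec_mulVec, hAinv, Matrix.one_mulVec, hnext, he]
    abel
  rw [hkey]
  have h2 := euclNorm_mulVec_le A⁻¹ ((J xk)ᵀ.mulVec r + lamk • (Lᵀ.mulVec (L.mulVec e)))
  have h3 := euclNorm_add_le ((J xk)ᵀ.mulVec r) (lamk • (Lᵀ.mulVec (L.mulVec e)))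
  have h4 := euclNorm_mulVec_le (J xk)ᵀ r
  have h5 := euclNorm_mulVec_le Lᵀ (L.mulVec e)
  have h6 : euclNorm (lamk • (Lᵀ.mulVec (L.mulVec e))) = lamk * euclNorm (Lᵀ.mulVec (L.mulVec e)) := by
    rw [euclNorm_smul, abs_of_pos hlamk]
  -- bound euclNorm r via tcc
  have hLneg : euclNorm (L.mulVec (xstar - xk)) = euclNorm (L.mulVec e) := by
    have : L.mulVec (xstar - xk) = -(L.mulVec e) := by
      rw [he, ← Matrix.mulVec_neg]; congr 1; abel
    rw [this, euclNorm_neg]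
  have hFneg : euclNorm (F xstar - F xk) = euclNorm (F xk - y) := by
    rw [← hxstar]
    have : F xstar - F xk = -(F xk - F xstar) := by abel
    rw [this, euclNorm_neg]
  have hrneg : euclNorm r = euclNorm ((J xk).mulVec (xstar - xk) - F xstar + F xk) := by
    have hvec : (J xk).mulVec (xstar - xk) - F xstar + F xk = -r := by
      have h : (J xk).mulVec (xstar - xk) = -((J xk).mulVec (xk - xstar)) := by
        rw [← Matrix.mulVec_neg]; congr 1; abel
      rw [hr, he, h]; abel
    rw [hvec, euclNorm_neg]
  have hrb : euclNorm r ≤ c * euclNorm (L.mulVec e) * euclNorm (F xk - y) := by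
    rw [hrneg]; rw [hLneg, hFneg] at htcc; exact htcc
  have hnn1 := specNorm_nonneg ((J xk)ᵀ)
  have hnn2 := specNorm_nonneg Lᵀ
  have hnn3 := specNorm_nonneg A⁻¹
  have hnn4 := euclNorm_nonneg (L.mulVec e)
  calc euclNorm (A⁻¹.mulVec ((J xk)ᵀ.mulVec r + lamk • (Lᵀ.mulVec (L.mulVec e))))
      ≤ specNorm A⁻¹ * euclNorm ((J xk)ᵀ.mulVec r + lamk • (Lᵀ.mulVec (L.mulVec e))) := h2
    _ ≤ specNorm A⁻¹ * (specNorm ((J xk)ᵀ) * (c * euclNorm (L.mulVec e) * euclNorm (F xk - y))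
          + lamk * (specNorm Lᵀ * euclNorm (L.mulVec e))) := by
        apply mul_le_mul_of_nonneg_left _ hnn3
        refine le_trans h3 (add_le_add (le_trans h4 ?_) ?_)
        · exact mul_le_mul_of_nonneg_left hrb hnn1
        · rw [h6]; exact mul_le_mul_of_nonneg_left h5 hlamk.le
    _ = specNorm A⁻¹ * (specNorm ((J xk)ᵀ) * c * euclNorm (F xk - y) + lamk * specNorm Lᵀ) *
          euclNorm (L.mulVec e) := by ring
end
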